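/- There exist infinitely many connected cubic graphs whose total domatic number equals 1. -/

import Mathlib

/-- `S` is a total dominating set of `G`. -/
def totalDom {V : Type*} (G : SimpleGraph V) (S : Set V) : Prop :=
  ∀ v : V, ∃ u ∈ S, G.Adj v u

/-- `V(G)` admits a partition into `k` total dominating sets of `G`. -/
def tdFamily {V : Type*} (G : SimpleGraph V) (k : ℕ) : Prop :=
  ∃ f : Fin k → Set V, Pairwise (Function.onFun Disjoint f) ∧
    (⋃ i, f i) = Set.univ ∧ ∀ i, totalDom G (f i)

namespace TD16

abbrev Z7 := ZMod 7

/-- point `p` lies on line `l` in the Fano plane built from difference set {0,1,3}. -/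
abbrev memLine (p l : Z7) : Prop := p - l = 0 ∨ p - l = 1 ∨ p - l = 3

abbrev Vk (k : ℕ) := ZMod k × Bool × Z7

/-- one direction of adjacency -/
abbrev halfAdj (k : ℕ) (x y : Vk k) : Prop :=
  (x.2.1 = false ∧ y.2.1 = true ∧ x.1 = y.1 ∧ memLine x.2.2 y.2.2 ∧
      ¬(x.2.2 = 0 ∧ y.2.2 = 0))
  ∨ (x.2.1 = true ∧ y.2.1 = false ∧ x.2.2 = 0 ∧ y.2.2 = 0 ∧ y.1 = x.1 + 1)

def HG (k : ℕ) : SimpleGraph (Vk k) where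
  Adj x y := halfAdj k x y ∨ halfAdj k y x
  symm := ⟨fun x y h => h.symm⟩
  loopless := ⟨fun x h => by
    rcases h with (⟨h1,h2,_⟩|⟨h1,h2,_⟩)|(⟨h1,h2,_⟩|⟨h1,h2,_⟩) <;> simp_all⟩

lemma line_adj (k : ℕ) (c : ZMod k) (l : Z7) (u : Vk k) :
    (HG k).Adj (c, true, l) u ↔
      (∃ p, u = (c, false, p) ∧ memLine p l ∧ ¬(p = 0 ∧ l = 0)) ∨
      (l = 0 ∧ u = (c + 1, false, 0)) := by
  obtain ⟨c', b, p⟩ := u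
  constructor
  · rintro ((⟨h1,_⟩|⟨_,h2,h3,h4,h5⟩)|(⟨h1,_,h3,h4,h5⟩|⟨_,h2,_⟩))
    · simp at h1
    · simp at h2; subst h2 h4
      have h5' : c' = c + 1 := h5
      subst h5'
      exact Or.inr ⟨h3, rfl⟩
    · simp at h1; subst h1
      have h3' : c' = c := h3
      subst h3'
      exact Or.inl ⟨p, rfl, h4, fun hh => h5 ⟨hh.1, hh.2⟩⟩
    · simp at h2
  · rintro (⟨q, hq, hm, hne⟩|⟨hl, hu⟩)
    · rw [show ((c:ZMod k), (true, l)) = ((c,true,l) : Vk k) from rfl] at *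
      rw [hq]
      exact Or.inr (Or.inl ⟨rfl, rfl, rfl, hm, hne⟩)
    · rw [hu]
      exact Or.inl (Or.inr ⟨rfl, rfl, hl, rfl, rfl⟩)

lemma point_adj (k : ℕ) (c : ZMod k) (p : Z7) (u : Vk k) :
    (HG k).Adj (c, false, p) u ↔
      (∃ l, u = (c, true, l) ∧ memLine p l ∧ ¬(p = 0 ∧ l = 0)) ∨
      (p = 0 ∧ u = (c - 1, true, 0)) := by
  obtain ⟨c', b, l⟩ := u
  constructor
  · rintro ((⟨_,h2,h3,h4,h5⟩|⟨h1,_⟩)|(⟨_,h2,_⟩|⟨h1,h2,h3,h4,h5⟩))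
    · simp at h2; subst h2
      have h3' : c = c' := h3
      subst h3'
      exact Or.inl ⟨l, rfl, h4, fun hh => h5 ⟨hh.1, hh.2⟩⟩
    · simp at h1
    · simp at h2
    · simp at h1; subst h1
      have h3' : l = 0 := h3
      subst h3'
      have h4' : p = 0 := h4
      subst h4'
      have h5' : c = c' + 1 := h5
      refine Or.inr ⟨rfl, ?_⟩
      have : c' = c - 1 := by rw [h5']; ring
      rw [this]
  · rintro (⟨m, hm, hmem, hne⟩|⟨hp, hu⟩)
    · rw [hm]
      exact Or.inl (Or.inl ⟨rfl, rfl, rfl, hmem, hne⟩)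
    · rw [hu]
      refine Or.inr (Or.inr ⟨rfl, rfl, rfl, hp, by ring⟩)


lemma memLine_iff (p l : Z7) : memLine p l ↔ (l = p ∨ l = p - 1 ∨ l = p - 3) := by
  revert p l; decide

lemma nbhd_line0 (k : ℕ) (c : ZMod k) :
    {u | (HG k).Adj (c, true, (0:Z7)) u} =
      {((c, false, 1) : Vk k), (c, false, 3), (c + 1, false, 0)} := by
  ext u
  simp only [Set.mem_setOf_eq, line_adj, Set.mem_insert_iff, Set.mem_singleton_iff]
  constructor
  · rintro (⟨p, rfl, hm, hne⟩|⟨_, rfl⟩)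
    · have hp0 : p ≠ 0 := fun h => hne ⟨h, trivial⟩
      have hp : p = 1 ∨ p = 3 := by
        have : ∀ q : Z7, q ≠ 0 → memLine q 0 → (q = 1 ∨ q = 3) := by decide
        exact this p hp0 hm
      rcases hp with rfl|rfl
      · exact Or.inl rfl
      · exact Or.inr (Or.inl rfl)
    · tauto
  · rintro (rfl|rfl|rfl)
    · exact Or.inl ⟨1, rfl, by decide, by decide⟩
    · exact Or.inl ⟨3, rfl, by decide, by decide⟩
    · exact Or.inr ⟨trivial, rfl⟩


lemma nbhd_line (k : ℕ) (c : ZMod k) (l : Z7) (hl : l ≠ 0) :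
    {u | (HG k).Adj (c, true, l) u} =
      {((c, false, l) : Vk k), (c, false, l + 1), (c, false, l + 3)} := by
  ext u
  simp only [Set.mem_setOf_eq, line_adj, Set.mem_insert_iff, Set.mem_singleton_iff]
  constructor
  · rintro (⟨p, rfl, hm, hne⟩|⟨h0, _⟩)
    · have hp : p = l ∨ p = l + 1 ∨ p = l + 3 := by
        have : ∀ q m : Z7, memLine q m → (q = m ∨ q = m + 1 ∨ q = m + 3) := by decide
        exact this p l hm
      rcases hp with rfl|rfl|rfl
      · exact Or.inl rfl
      · exact Or.inr (Or.inl rfl)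
      · exact Or.inr (Or.inr rfl)
    · exact absurd h0 hl
  · have hml : ∀ q m : Z7, (q = m ∨ q = m + 1 ∨ q = m + 3) → memLine q m := by decide
    rintro (rfl|rfl|rfl)
    · exact Or.inl ⟨l, rfl, hml l l (Or.inl rfl), fun hh => hl hh.2⟩
    · exact Or.inl ⟨l + 1, rfl, hml _ l (Or.inr (Or.inl rfl)), fun hh => hl hh.2⟩
    · exact Or.inl ⟨l + 3, rfl, hml _ l (Or.inr (Or.inr rfl)), fun hh => hl hh.2⟩

lemma nbhd_point0 (k : ℕ) (c : ZMod k) :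
    {u | (HG k).Adj (c, false, (0:Z7)) u} =
      {((c, true, 6) : Vk k), (c, true, 4), (c - 1, true, 0)} := by
  ext u
  simp only [Set.mem_setOf_eq, point_adj, Set.mem_insert_iff, Set.mem_singleton_iff]
  constructor
  · rintro (⟨l, rfl, hm, hne⟩|⟨_, rfl⟩)
    · have hl0 : l ≠ 0 := fun h => hne ⟨trivial, h⟩
      have hl : l = 6 ∨ l = 4 := by
        have : ∀ m : Z7, m ≠ 0 → memLine 0 m → (m = 6 ∨ m = 4) := by decide
        exact this l hl0 hm
      rcases hl with rfl|rfl
      · exact Or.inl rfl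
      · exact Or.inr (Or.inl rfl)
    · exact Or.inr (Or.inr rfl)
  · rintro (rfl|rfl|rfl)
    · exact Or.inl ⟨6, rfl, by decide, by decide⟩
    · exact Or.inl ⟨4, rfl, by decide, by decide⟩
    · exact Or.inr ⟨trivial, rfl⟩

lemma nbhd_point (k : ℕ) (c : ZMod k) (p : Z7) (hp : p ≠ 0) :
    {u | (HG k).Adj (c, false, p) u} =
      {((c, true, p) : Vk k), (c, true, p - 1), (c, true, p - 3)} := by
  ext u
  simp only [Set.mem_setOf_eq, point_adj, Set.mem_insert_iff, Set.mem_singleton_iff]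
  constructor
  · rintro (⟨l, rfl, hm, hne⟩|⟨h0, _⟩)
    · have hl : l = p ∨ l = p - 1 ∨ l = p - 3 := (memLine_iff p l).mp hm
      rcases hl with rfl|rfl|rfl
      · exact Or.inl rfl
      · exact Or.inr (Or.inl rfl)
      · exact Or.inr (Or.inr rfl)
    · exact absurd h0 hp
  · rintro (rfl|rfl|rfl)
    · exact Or.inl ⟨p, rfl, (memLine_iff p p).mpr (Or.inl rfl), fun hh => hp hh.1⟩
    · exact Or.inl ⟨p - 1, rfl, (memLine_iff p _).mpr (Or.inr (Or.inl rfl)),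
        fun hh => hp hh.1⟩
    · exact Or.inl ⟨p - 3, rfl, (memLine_iff p _).mpr (Or.inr (Or.inr rfl)),
        fun hh => hp hh.1⟩

lemma ncard_triple {α : Type*} {a b c : α} (h1 : a ≠ b) (h2 : a ≠ c) (h3 : b ≠ c) :
    ({a, b, c} : Set α).ncard = 3 :=
  Set.ncard_eq_three.mpr ⟨a, b, c, h1, h2, h3, rfl⟩

lemma degree_three (k : ℕ) (v : Vk k) : {u | (HG k).Adj v u}.ncard = 3 := by
  obtain ⟨c, b, p⟩ := v
  cases b
  · by_cases hp : p = 0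
    · subst hp
      rw [nbhd_point0]
      refine ncard_triple ?_ ?_ ?_ <;> intro h <;>
        injection h with h1 h2 <;> injection h2 with h2 h3 <;>
        exact absurd h3 (by decide)
    · rw [nbhd_point k c p hp]
      have d1 : p ≠ p - 1 := by revert p; decide
      have d2 : p ≠ p - 3 := by revert p; decide
      have d3 : p - 1 ≠ p - 3 := by revert p; decide
      refine ncard_triple ?_ ?_ ?_ <;> intro h <;>
        injection h with h1 h2 <;> injection h2 with h2 h3 <;>
        first | exact d1 h3 | exact d2 h3 | exact d3 h3
  · by_cases hp : p = 0
    · subst hp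
      rw [nbhd_line0]
      refine ncard_triple ?_ ?_ ?_ <;> intro h <;>
        injection h with h1 h2 <;> injection h2 with h2 h3 <;>
        exact absurd h3 (by decide)
    · rw [nbhd_line k c p hp]
      have d1 : p ≠ p + 1 := by revert p; decide
      have d2 : p ≠ p + 3 := by revert p; decide
      have d3 : p + 1 ≠ p + 3 := by revert p; decide
      refine ncard_triple ?_ ?_ ?_ <;> intro h <;>
        injection h with h1 h2 <;> injection h2 with h2 h3 <;>
        first | exact d1 h3 | exact d2 h3 | exact d3 h3


lemma adj_pl (k : ℕ) (c : ZMod k) (p l : Z7) (hm : memLine p l)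
    (hne : ¬(p = 0 ∧ l = 0)) : (HG k).Adj (c, false, p) (c, true, l) :=
  Or.inl (Or.inl ⟨rfl, rfl, rfl, hm, hne⟩)

lemma adj_cross (k : ℕ) (c : ZMod k) : (HG k).Adj (c, true, (0:Z7)) (c + 1, false, 0) :=
  Or.inl (Or.inr ⟨rfl, rfl, rfl, rfl, rfl⟩)

lemma reach_line_step (k : ℕ) (c : ZMod k) (l : Z7) (hl : l ≠ 6) :
    (HG k).Reachable (c, true, l) (c, true, l + 1) := by
  have h1 : (HG k).Adj (c, false, l + 1) (c, true, l) :=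
    adj_pl k c (l+1) l (by revert l; decide) (by revert l; decide)
  have key : ∀ m : Z7, m + 1 = 0 → m = 6 := by decide
  have h2 : (HG k).Adj (c, false, l + 1) (c, true, l + 1) :=
    adj_pl k c (l+1) (l+1) (Or.inl (sub_self _)) (fun hh => hl (key l hh.1))
  exact (h1.symm.reachable).trans h2.reachable

lemma reach_line0 (k : ℕ) (c : ZMod k) (l : Z7) :
    (HG k).Reachable (c, true, (0:Z7)) (c, true, l) := by
  have s0 := reach_line_step k c 0 (by decide)
  have s1 := reach_line_step k c 1 (by decide)
  have s2 := reach_line_step k c 2 (by decide)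
  have s3 := reach_line_step k c 3 (by decide)
  have s4 := reach_line_step k c 4 (by decide)
  have s5 := reach_line_step k c 5 (by decide)
  have hcase : l = 0 ∨ l = 1 ∨ l = 2 ∨ l = 3 ∨ l = 4 ∨ l = 5 ∨ l = 6 := by
    revert l; decide
  have e1 : (0:Z7) + 1 = 1 := by decide
  have e2 : (1:Z7) + 1 = 2 := by decide
  have e3 : (2:Z7) + 1 = 3 := by decide
  have e4 : (3:Z7) + 1 = 4 := by decide
  have e5 : (4:Z7) + 1 = 5 := by decide
  have e6 : (5:Z7) + 1 = 6 := by decide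
  rw [e1] at s0; rw [e2] at s1; rw [e3] at s2; rw [e4] at s3
  rw [e5] at s4; rw [e6] at s5
  rcases hcase with rfl|rfl|rfl|rfl|rfl|rfl|rfl
  · rfl
  · exact s0
  · exact s0.trans s1
  · exact (s0.trans s1).trans s2
  · exact ((s0.trans s1).trans s2).trans s3
  · exact (((s0.trans s1).trans s2).trans s3).trans s4
  · exact ((((s0.trans s1).trans s2).trans s3).trans s4).trans s5

lemma reach_point (k : ℕ) (c : ZMod k) (p : Z7) :
    (HG k).Reachable (c, false, p) (c, true, (0:Z7)) := by
  have h1 : (HG k).Adj (c, false, p) (c, true, p - 1) :=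
    adj_pl k c p (p-1) (by revert p; decide) (by revert p; decide)
  exact h1.reachable.trans (reach_line0 k c (p-1)).symm

lemma reach_cross (k : ℕ) (c : ZMod k) :
    (HG k).Reachable (c, true, (0:Z7)) (c + 1, true, (0:Z7)) :=
  (adj_cross k c).reachable.trans (reach_point k (c+1) 0)

lemma HG_connected (k : ℕ) [NeZero k] : (HG k).Connected := by
  rw [SimpleGraph.connected_iff]
  refine ⟨?_, ⟨((0 : ZMod k), true, (0:Z7))⟩⟩
  have base : ∀ i : ℕ, (HG k).Reachable ((0 : ZMod k), true, (0:Z7)) ((i : ZMod k), true, 0) := by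
    intro i
    induction i with
    | zero =>
      rw [Nat.cast_zero]
    | succ j ih =>
      have : ((j+1 : ℕ) : ZMod k) = (j : ZMod k) + 1 := by push_cast; ring
      rw [this]
      exact ih.trans (reach_cross k j)
  have tozero : ∀ v : Vk k, (HG k).Reachable v ((0 : ZMod k), true, 0) := by
    rintro ⟨c, b, p⟩
    obtain ⟨i, rfl⟩ := ZMod.natCast_zmod_surjective (n := k) c
    have h2 := (base i).symm
    cases b
    · exact (reach_point k _ p).trans h2
    · exact ((reach_line0 k _ p).symm).trans h2
  intro u v
  exact (tozero u).trans (tozero v).symm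


/-- every vertex of `HG k` has a neighbour, so the whole vertex set is a TDS -/
lemma td1 (k : ℕ) : tdFamily (HG k) 1 := by
  refine ⟨fun _ => Set.univ, ?_, ?_, ?_⟩
  · intro i j hij
    exact absurd (Subsingleton.elim i j) hij
  · exact Set.iUnion_const _
  · intro _
    rintro ⟨c, b, p⟩
    cases b
    · exact ⟨(c, true, p - 1), Set.mem_univ _,
        adj_pl k c p (p-1) (by revert p; decide) (by revert p; decide)⟩
    · refine ⟨(c, false, p + 1), Set.mem_univ _, ?_⟩
      exact (SimpleGraph.Adj.symm (adj_pl k c (p+1) p (by revert p; decide) (by revert p; decide)))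

lemma totalDom_mono {V : Type*} {G : SimpleGraph V} {S T : Set V} (h : S ⊆ T)
    (hS : totalDom G S) : totalDom G T := fun v =>
  let ⟨u, hu, ha⟩ := hS v; ⟨u, h hu, ha⟩

lemma tdFamily_two_iff {V : Type*} (G : SimpleGraph V) : tdFamily G 2 ↔
    ∃ A B : Set V, Disjoint A B ∧ A ∪ B = Set.univ ∧ totalDom G A ∧ totalDom G B := by
  constructor
  · rintro ⟨f, hd, hu, ht⟩
    refine ⟨f 0, f 1, hd (by decide), ?_, ht 0, ht 1⟩
    rw [← hu]
    ext x
    simp only [Set.mem_iUnion, Set.mem_union, Fin.exists_fin_two]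
  · rintro ⟨A, B, hd, hu, hA, hB⟩
    refine ⟨![A, B], ?_, ?_, ?_⟩
    · intro i j hij
      fin_cases i <;> fin_cases j <;> simp_all [Function.onFun] <;>
        first | exact hd | exact hd.symm
    · rw [← hu]
      ext x
      simp only [Set.mem_iUnion, Set.mem_union, Fin.exists_fin_two]
      simp
    · intro i
      fin_cases i <;> simpa

/-- merging classes: a `k`-family with `2 ≤ k` yields a `2`-family -/
lemma td_two_of_td {V : Type*} (G : SimpleGraph V) (k : ℕ) (hk : 2 ≤ k)
    (h : tdFamily G k) : tdFamily G 2 := by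
  obtain ⟨f, hdisj, hunion, htd⟩ := h
  have h0 : (0 : ℕ) < k := by omega
  have h1 : (1 : ℕ) < k := by omega
  rw [tdFamily_two_iff]
  refine ⟨f ⟨0, h0⟩, ⋃ (j : Fin k) (_ : j ≠ ⟨0, h0⟩), f j, ?_, ?_, htd ⟨0, h0⟩, ?_⟩
  · refine Set.disjoint_iUnion_right.mpr fun j => Set.disjoint_iUnion_right.mpr ?_
    intro hj
    exact hdisj (Ne.symm hj)
  · apply Set.eq_univ_of_univ_subset
    intro x _
    have : x ∈ ⋃ i, f i := hunion ▸ Set.mem_univ x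
    obtain ⟨j, hj⟩ := Set.mem_iUnion.mp this
    by_cases hj0 : j = ⟨0, h0⟩
    · exact Or.inl (hj0 ▸ hj)
    · exact Or.inr (Set.mem_iUnion.mpr ⟨j, Set.mem_iUnion.mpr ⟨hj0, hj⟩⟩)
  · have hne : (⟨1, h1⟩ : Fin k) ≠ ⟨0, h0⟩ := by
      intro h
      have := congrArg Fin.val h
      exact Nat.one_ne_zero this
    refine totalDom_mono ?_ (htd ⟨1, h1⟩)
    intro x hx
    exact Set.mem_iUnion.mpr ⟨⟨1, h1⟩, Set.mem_iUnion.mpr ⟨hne, hx⟩⟩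

set_option maxRecDepth 4000 in
/-- the Fano plane is not 2-colourable -/
lemma fano (g : Z7 → Bool) : ∃ l : Z7, g (l + 1) = g l ∧ g (l + 3) = g l := by
  revert g; decide


lemma not_td2 (n : ℕ) : ¬ tdFamily (HG (2 * n + 1)) 2 := by
  classical
  set k : ℕ := 2 * n + 1 with hk
  rw [tdFamily_two_iff]
  rintro ⟨A, B, hd, hu, hA, hB⟩
  let col : Vk k → Bool := fun v => decide (v ∈ B)
  have memB : ∀ v : Vk k, col v = true ↔ v ∈ B := by
    intro v; simp [col]
  have memA : ∀ v : Vk k, col v = false ↔ v ∈ A := by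
    intro v
    constructor
    · intro h
      have hvB : v ∉ B := by
        intro hvB
        rw [(memB v).mpr hvB] at h
        exact absurd h (by simp)
      have : v ∈ A ∪ B := hu ▸ Set.mem_univ v
      rcases this with h'|h'
      · exact h'
      · exact absurd h' hvB
    · intro h
      have hvB : v ∉ B := fun hb => Set.disjoint_left.mp hd h hb
      simpa [col] using hvB
  have no_mono : ∀ (v : Vk k) (b : Bool),
      ¬ (∀ u : Vk k, (HG k).Adj v u → col u = b) := by
    intro v b h
    obtain ⟨uA, hua, haa⟩ := hA v
    obtain ⟨uB, hub, hbb⟩ := hB v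
    have h1 : col uA = b := h uA haa
    have h2 : col uB = b := h uB hbb
    rw [(memA uA).mpr hua] at h1
    rw [(memB uB).mpr hub] at h2
    rw [← h1] at h2
    exact Bool.false_ne_true h2.symm
  -- per-copy analysis
  have step : ∀ c : ZMod k, col (c + 1, false, 0) = ! col (c, false, 0) := by
    intro c
    obtain ⟨l, hl1, hl3⟩ := fano (fun p => col (c, false, p))
    by_cases hl0 : l = 0
    · subst hl0
      rw [show (0:Z7) + 1 = 1 by decide] at hl1
      rw [show (0:Z7) + 3 = 3 by decide] at hl3
      by_cases hcc : col (c + 1, false, 0) = col (c, false, 0)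
      · exfalso
        apply no_mono (c, true, (0:Z7)) (col (c, false, 0))
        intro u hadj
        have hu' : u ∈ ({(c, false, 1), (c, false, 3), (c + 1, false, 0)} : Set (Vk k)) := by
          rw [← nbhd_line0 k c]; exact hadj
        rcases hu' with rfl|rfl|rfl
        · exact hl1
        · exact hl3
        · exact hcc
      · cases hb : col (c, false, 0) <;> cases hb' : col (c + 1, false, 0) <;>
          simp_all
    · exfalso
      apply no_mono (c, true, l) (col (c, false, l))
      intro u hadj
      have hu' : u ∈ ({(c, false, l), (c, false, l + 1), (c, false, l + 3)} : Set (Vk k)) := by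
        rw [← nbhd_line k c l hl0]; exact hadj
      rcases hu' with rfl|rfl|rfl
      · rfl
      · exact hl1
      · exact hl3
  -- parity contradiction around the odd cycle
  have par : ∀ i : ℕ, col (((i : ℕ) : ZMod k), false, 0) =
      (if i % 2 = 0 then col ((0 : ZMod k), false, 0)
       else ! col ((0 : ZMod k), false, 0)) := by
    intro i
    induction i with
    | zero => simp
    | succ j ih =>
      have hc : ((j + 1 : ℕ) : ZMod k) = ((j : ℕ) : ZMod k) + 1 := by push_cast; ring
      rw [hc, step, ih]
      rcases Nat.even_or_odd j with hj|hj
      · have e1 : j % 2 = 0 := Nat.even_iff.mp hj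
        have e2 : (j + 1) % 2 = 1 := by omega
        simp [e1, e2]
      · have e1 : j % 2 = 1 := Nat.odd_iff.mp hj
        have e2 : (j + 1) % 2 = 0 := by omega
        simp [e1, e2]
  have hk0 : ((k : ℕ) : ZMod k) = 0 := ZMod.natCast_self k
  have hkodd : k % 2 = 1 := by omega
  have := par k
  rw [hk0, hkodd] at this
  simp at this


section Transfer

variable {α β : Type*} (e : α ≃ β) (G : SimpleGraph β)

lemma comap_td (j : ℕ) : tdFamily (G.comap ⇑e.toEmbedding) j ↔ tdFamily G j := by
  constructor
  · rintro ⟨f, hdisj, hunion, htd⟩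
    refine ⟨fun i => e '' f i, ?_, ?_, ?_⟩
    · intro i j hij
      exact (Set.disjoint_image_iff e.injective).mpr (hdisj hij)
    · rw [← Set.image_iUnion, hunion, Set.image_univ, e.range_eq_univ]
    · intro i v
      obtain ⟨u, hu, hadj⟩ := htd i (e.symm v)
      refine ⟨e u, Set.mem_image_of_mem _ hu, ?_⟩
      have : G.Adj (e (e.symm v)) (e u) := hadj
      simpa using this
  · rintro ⟨f, hdisj, hunion, htd⟩
    refine ⟨fun i => ⇑e ⁻¹' f i, ?_, ?_, ?_⟩
    · intro i j hij
      exact Disjoint.preimage _ (hdisj hij)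
    · rw [← Set.preimage_iUnion, hunion, Set.preimage_univ]
    · intro i v
      obtain ⟨u, hu, hadj⟩ := htd i (e v)
      refine ⟨e.symm u, ?_, ?_⟩
      · simpa using hu
      · show G.Adj (e v) (e (e.symm u))
        simpa using hadj
  
lemma comap_ncard (v : α) :
    {u | (G.comap ⇑e.toEmbedding).Adj v u}.ncard = {u | G.Adj (e v) u}.ncard := by
  have him : {u | (G.comap ⇑e.toEmbedding).Adj v u} = ⇑e.symm '' {u | G.Adj (e v) u} := by
    ext u
    constructor
    · intro h
      exact ⟨e u, h, by simp⟩
    · rintro ⟨w, hw, rfl⟩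
      show G.Adj (e v) (e (e.symm w))
      simpa using hw
  rw [him, Set.ncard_image_of_injective _ e.symm.injective]

end Transfer

end TD16

/-- There are infinitely many connected cubic graphs with total domatic number
exactly 1. -/
theorem stmt16 :
    ∀ n : ℕ, ∃ m : ℕ, n ≤ m ∧ ∃ G : SimpleGraph (Fin m),
      G.Connected ∧ (∀ v, ({u | G.Adj v u}).ncard = 3) ∧
      tdFamily G 1 ∧ ∀ k : ℕ, tdFamily G k → k ≤ 1 := by
  intro n
  refine ⟨14 * (2 * n + 1), by omega, ?_⟩
  haveI : NeZero (2 * n + 1) := ⟨by omega⟩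
  have hcard : Fintype.card (Fin (14 * (2 * n + 1))) = Fintype.card (TD16.Vk (2 * n + 1)) := by
    simp [TD16.Vk, ZMod.card]
    ring
  let e : Fin (14 * (2 * n + 1)) ≃ TD16.Vk (2 * n + 1) := Fintype.equivOfCardEq hcard
  refine ⟨(TD16.HG (2 * n + 1)).comap ⇑e.toEmbedding, ?_, ?_, ?_, ?_⟩
  · exact (SimpleGraph.Iso.comap e _).connected_iff.mpr (TD16.HG_connected _)
  · intro v
    rw [TD16.comap_ncard]
    exact TD16.degree_three _ _
  · exact (TD16.comap_td e _ 1).mpr (TD16.td1 _)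
  · intro k hk
    by_contra hk1
    have h2 : 2 ≤ k := by omega
    exact TD16.not_td2 n ((TD16.comap_td e _ 2).mp (TD16.td_two_of_td _ k h2 hk))
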